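/- Let q ∈ ℂ, q not a root of unity, and let (m_j)_{j∈ℤ} be a sequence with m_{j+1} = [2]m_j - m_{j-1} and m_1² - [2]m_0m_1 + m_0² - 1 = 0. Suppose α_{j,j+1} = (m_0m_{-1} - m_jm_{j+1})/((m_{j-1} - m_{j+1})(m_{j-2} - m_j)) is well defined and equals 0 with j = 2k even. Then m_k = 0 or m_k = ±2i/(q - q^{-1}). -/

import Mathlib

private lemma fid (q : ℂ) (hq : q ≠ 0) (A B : ℂ) (j : ℤ) :
    A * q ^ (j+1) + B * q ^ (-(j+1)) + (A * q ^ (j-1) + B * q ^ (-(j-1)))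
      = (q + q⁻¹) * (A * q ^ j + B * q ^ (-j)) := by
  have ht : q ^ j ≠ 0 := zpow_ne_zero _ hq
  rw [show (-(j+1):ℤ) = -j + -1 by ring, show (-(j-1):ℤ) = -j + 1 by ring,
    zpow_add₀ hq j 1, zpow_sub₀ hq j 1, zpow_add₀ hq (-j) (-1), zpow_add₀ hq (-j) 1,
    zpow_neg, zpow_neg, zpow_one]
  field_simp
  ring

private lemma closed_form (q : ℂ) (hq : q ≠ 0) (A B : ℂ) (m : ℤ → ℂ)
    (h0 : m 0 = A + B) (h1 : m 1 = A * q + B * q⁻¹)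
    (hrec : ∀ j : ℤ, m (j + 1) = (q + q⁻¹) * m j - m (j - 1)) :
    ∀ j : ℤ, m j = A * q ^ j + B * q ^ (-j) := by
  set f : ℤ → ℂ := fun j => A * q ^ j + B * q ^ (-j) with hf
  have frec : ∀ j : ℤ, f (j + 1) = (q + q⁻¹) * f j - f (j - 1) := by
    intro j
    show A * q ^ (j+1) + B * q ^ (-(j+1)) =
      (q + q⁻¹) * (A * q ^ j + B * q ^ (-j)) - (A * q ^ (j-1) + B * q ^ (-(j-1)))
    linear_combination fid q hq A B j
  have key : ∀ j : ℤ, m j = f j ∧ m (j+1) = f (j+1) := by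
    intro j
    induction j using Int.induction_on with
    | zero =>
      constructor
      · show m 0 = A * q ^ (0:ℤ) + B * q ^ (-(0:ℤ))
        simpa using h0
      · show m (0+1) = A * q ^ ((0:ℤ)+1) + B * q ^ (-((0:ℤ)+1))
        norm_num
        simpa [zpow_neg] using h1
    | succ i ih =>
      obtain ⟨ih1, ih2⟩ := ih
      refine ⟨ih2, ?_⟩
      have hr := hrec ((i:ℤ) + 1)
      have fr := frec ((i:ℤ) + 1)
      simp only [add_sub_cancel_right] at hr fr
      rw [hr, fr, ih1, ih2]
    | pred i ih =>
      obtain ⟨ih1, ih2⟩ := ih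
      have hr := hrec (-(i:ℤ))
      have fr := frec (-(i:ℤ))
      constructor
      · have e1 : (-(i:ℤ) - 1 : ℤ) = -((i:ℤ)+1) := by ring
        rw [e1] at hr fr ⊢
        have : m (-((i:ℤ)+1)) = (q + q⁻¹) * m (-(i:ℤ)) - m (-(i:ℤ) + 1) := by
          linear_combination hr
        rw [this, ih1, ih2]
        linear_combination -fr
      · simpa [show (-(i:ℤ) - 1 + 1 : ℤ) = -(i:ℤ) by ring] using ih1
  exact fun j => (key j).1

theorem alpha_zero_even (q : ℂ) (hq : q ≠ 0)
    (hroot : ∀ n : ℤ, n ≠ 0 → q ^ n ≠ 1)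
    (m : ℤ → ℂ)
    (hquad : m 1 ^ 2 - (q + q⁻¹) * m 0 * m 1 + m 0 ^ 2 - 1 = 0)
    (hrec : ∀ j : ℤ, m (j + 1) = (q + q⁻¹) * m j - m (j - 1))
    (k : ℤ) (hk : 0 ≤ k)
    (hden : (m (2 * k - 1) - m (2 * k + 1)) * (m (2 * k - 2) - m (2 * k)) ≠ 0)
    (hnum : m 0 * m (-1) - m (2 * k) * m (2 * k + 1) = 0) :
    m k = 0 ∨ m k = 2 * Complex.I / (q - q⁻¹) ∨ m k = -(2 * Complex.I / (q - q⁻¹)) := by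
  have hqq' : q * q⁻¹ = 1 := mul_inv_cancel₀ hq
  have hq2 : q ^ (2:ℕ) ≠ 1 := by
    have := hroot 2 (by norm_num)
    rwa [show ((2:ℤ)) = ((2:ℕ):ℤ) by norm_num, zpow_natCast] at this
  have hd : q - q⁻¹ ≠ 0 := by
    intro h
    apply hq2
    have hq' : q = q⁻¹ := sub_eq_zero.mp h
    calc q ^ 2 = q * q := by ring
    _ = q * q⁻¹ := by rw [← hq']
    _ = 1 := hqq'
  obtain ⟨A, B, h0, h1⟩ : ∃ A B : ℂ, m 0 = A + B ∧ m 1 = A * q + B * q⁻¹ := by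
    refine ⟨(m 1 - m 0 * q⁻¹) / (q - q⁻¹), (q * m 0 - m 1) / (q - q⁻¹), ?_, ?_⟩
    · rw [← add_div, show m 1 - m 0 * q⁻¹ + (q * m 0 - m 1) = m 0 * (q - q⁻¹) by ring,
        mul_div_assoc, div_self hd, mul_one]
    · rw [div_mul_eq_mul_div, div_mul_eq_mul_div, ← add_div,
        show (m 1 - m 0 * q⁻¹) * q + (q * m 0 - m 1) * q⁻¹ = m 1 * (q - q⁻¹) by ring,
        mul_div_assoc, div_self hd, mul_one]
  have hform := closed_form q hq A B m h0 h1 hrec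
  -- quadratic relation in terms of A, B
  have hABd : A * B * (q - q⁻¹) ^ 2 = -1 := by
    have h := hquad
    rw [h0, h1] at h
    linear_combination -h - (A + B) ^ 2 * hqq'
  obtain ⟨u, hu_def⟩ : ∃ u : ℂ, u = q ^ k := ⟨_, rfl⟩
  have hu : u ≠ 0 := hu_def ▸ zpow_ne_zero k hq
  have huu : u * u⁻¹ = 1 := mul_inv_cancel₀ hu
  -- power bookkeeping
  have e : q ^ (2 * k : ℤ) = u ^ 2 := by
    rw [show (2 * k : ℤ) = k + k by ring, zpow_add₀ hq, ← hu_def]; ring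
  have e2 : q ^ (-(2 * k) : ℤ) = (u ^ 2)⁻¹ := by rw [zpow_neg, e]
  have e3 : q ^ (2 * k + 1 : ℤ) = u ^ 2 * q := by rw [zpow_add₀ hq, e, zpow_one]
  have e4 : q ^ (-(2 * k + 1) : ℤ) = (u ^ 2 * q)⁻¹ := by rw [zpow_neg, e3]
  -- closed forms at the needed points, inverse-free
  have hm0 : m 0 = A + B := h0
  have hmn1 : m (-1) = A * q⁻¹ + B * q := by
    have t := hform (-1)
    rwa [show ((-1:ℤ)) = -(1:ℤ) from rfl, zpow_neg, neg_neg, zpow_one] at t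
  have hmn1' : q * m (-1) = A + B * q ^ 2 := by
    rw [hmn1]; linear_combination A * hqq'
  have hm2k' : u ^ 2 * m (2 * k) = A * u ^ 4 + B := by
    have t := hform (2 * k)
    rw [e, e2] at t
    rw [t]
    have h2u : u ^ 2 * (u ^ 2)⁻¹ = 1 := mul_inv_cancel₀ (pow_ne_zero 2 hu)
    linear_combination B * h2u
  have hm2k1' : u ^ 2 * q * m (2 * k + 1) = A * u ^ 4 * q ^ 2 + B := by
    have t := hform (2 * k + 1)
    rw [e3, e4] at t
    rw [t]
    have h2u : (u ^ 2 * q) * (u ^ 2 * q)⁻¹ = 1 :=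
      mul_inv_cancel₀ (mul_ne_zero (pow_ne_zero 2 hu) hq)
    linear_combination B * h2u
  have hmk : m k = A * u + B * u⁻¹ := by
    have t := hform k
    rwa [zpow_neg, ← hu_def] at t
  -- factorized numerator
  have key : (1 - u ^ 4 * q ^ 2) * ((A * u ^ 2 - B) * (A * u ^ 2 + B))
      = u ^ 4 * (m 0 * (q * m (-1))) - (u ^ 2 * m (2 * k)) * (u ^ 2 * q * m (2 * k + 1)) := by
    rw [hm0, hmn1', hm2k', hm2k1']
    ring
  have hfac : (1 - u ^ 4 * q ^ 2) * ((A * u ^ 2 - B) * (A * u ^ 2 + B)) = 0 := by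
    rw [key, show u ^ 4 * (m 0 * (q * m (-1))) - (u ^ 2 * m (2 * k)) * (u ^ 2 * q * m (2 * k + 1))
      = q * u ^ 4 * (m 0 * m (-1) - m (2 * k) * m (2 * k + 1)) by ring, hnum, mul_zero]
  have hne : (1 : ℂ) - u ^ 4 * q ^ 2 ≠ 0 := by
    intro h
    apply hroot (4 * k + 2) (by omega)
    rw [show (4 * k + 2 : ℤ) = 2 * k + (2 * k + 2) by ring, zpow_add₀ hq, zpow_add₀ hq, e,
      show ((2:ℤ)) = ((2:ℕ):ℤ) by norm_num, zpow_natCast]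
    linear_combination -h
  have h2 : (A * u ^ 2 - B) * (A * u ^ 2 + B) = 0 := by
    rcases mul_eq_zero.mp hfac with h | h
    · exact absurd h hne
    · exact h
  rcases mul_eq_zero.mp h2 with h | h
  · -- A u² = B : m k = ±2i/(q-q⁻¹)
    have hmk2 : m k = 2 * A * u := by
      rw [hmk, show B = A * u ^ 2 by linear_combination -h]
      linear_combination A * u * huu
    have hsq : (m k * (q - q⁻¹)) ^ 2 = -4 := by
      rw [hmk2]
      linear_combination 4 * (q - q⁻¹) ^ 2 * A * h + 4 * hABd
    have hI : (m k * (q - q⁻¹) - 2 * Complex.I) * (m k * (q - q⁻¹) + 2 * Complex.I) = 0 := by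
      linear_combination hsq - 4 * Complex.I_sq
    rcases mul_eq_zero.mp hI with h' | h'
    · right; left
      rw [eq_div_iff hd]
      linear_combination h'
    · right; right
      rw [show -(2 * Complex.I / (q - q⁻¹)) = -(2 * Complex.I) / (q - q⁻¹) by rw [neg_div],
        eq_div_iff hd]
      linear_combination h'
  · -- A u² = -B : m k = 0
    left
    rw [hmk]
    have hz : (A * u + B * u⁻¹) * u = 0 := by linear_combination h + B * (inv_mul_cancel₀ hu)
    rcases mul_eq_zero.mp hz with h'' | h''
    · exact h''
    · exact absurd h'' hu
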